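/- Singular matrix determinant lemma: With Ã = A + e D f* as in Theorem 2.1, det(Ã) = det(A + e f*) · det(D). -/

import Mathlib

open Matrix

theorem stmt11 (n k r : ℕ) (hk : 1 ≤ k) (hnk : k < n) (hr : r = n - k)
    (A : Matrix (Fin n) (Fin n) ℂ) (hrank : A.rank = r)
    (Ur : Matrix (Fin n) (Fin r) ℂ) (Uk : Matrix (Fin n) (Fin k) ℂ)
    (Vr : Matrix (Fin n) (Fin r) ℂ) (Vk : Matrix (Fin n) (Fin k) ℂ)
    (S : Matrix (Fin r) (Fin r) ℂ) (hS : IsUnit S)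
    (hA : A = Ur * S * Vrᴴ)
    (hUr : Urᴴ * Ur = 1) (hUk : Ukᴴ * Uk = 1) (hUrk : Ukᴴ * Ur = 0)
    (hUfull : Ur * Urᴴ + Uk * Ukᴴ = 1)
    (hVr : Vrᴴ * Vr = 1) (hVk : Vkᴴ * Vk = 1) (hVrk : Vkᴴ * Vr = 0)
    (hVfull : Vr * Vrᴴ + Vk * Vkᴴ = 1)
    (e f : Matrix (Fin n) (Fin k) ℂ)
    (hUke : IsUnit (Ukᴴ * e)) (hfVk : IsUnit (fᴴ * Vk))
    (D : Matrix (Fin k) (Fin k) ℂ) :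
    (A + e * D * fᴴ).det = (A + e * fᴴ).det * D.det := by
  have hn : r + k = n := by omega
  have hVrk' : Vrᴴ * Vk = 0 := by
    have h := congrArg conjTranspose hVrk
    simpa [conjTranspose_mul] using h
  set a := Urᴴ * e with ha
  set g := Ukᴴ * e with hg
  set b := fᴴ * Vr with hb
  set c := fᴴ * Vk with hc
  have hcdet : IsUnit c.det := (isUnit_iff_isUnit_det c).mp hfVk
  have hcinv : c * c⁻¹ = 1 := mul_nonsing_inv c hcdet
  set X := fromCols Ur Uk with hX
  set Y := fromCols Vr Vk with hY
  have hXH : Xᴴ = fromRows Urᴴ Ukᴴ :=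
    conjTranspose_fromCols_eq_fromRows_conjTranspose Ur Uk
  have hYH : Yᴴ = fromRows Vrᴴ Vkᴴ :=
    conjTranspose_fromCols_eq_fromRows_conjTranspose Vr Vk
  have hXX : X * Xᴴ = 1 := by rw [hXH, hX, fromCols_mul_fromRows]; exact hUfull
  have hYY : Y * Yᴴ = 1 := by rw [hYH, hY, fromCols_mul_fromRows]; exact hVfull
  -- the key block computation
  have t1 : Xᴴ * Ur = fromRows 1 0 := by rw [hXH, fromRows_mul, hUr, hUrk]
  have t2 : Vrᴴ * Y = fromCols 1 0 := by rw [hY, mul_fromCols, hVr, hVrk']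
  have t3 : fromRows (1 : Matrix (Fin r) (Fin r) ℂ) (0 : Matrix (Fin k) (Fin r) ℂ) * S *
      fromCols (1 : Matrix (Fin r) (Fin r) ℂ) (0 : Matrix (Fin r) (Fin k) ℂ)
      = fromBlocks S 0 0 0 := by
    rw [fromRows_mul, fromRows_mul_fromCols]
    simp
  have t4 : Xᴴ * e = fromRows a g := by rw [hXH, fromRows_mul, ← ha, ← hg]
  have t5 : fᴴ * Y = fromCols b c := by rw [hY, mul_fromCols, ← hb, ← hc]
  have hN : ∀ M : Matrix (Fin k) (Fin k) ℂ,
      Xᴴ * (A + e * M * fᴴ) * Y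
        = fromBlocks (S + a * M * b) (a * M * c) (g * M * b) (g * M * c) := by
    intro M
    have expand : Xᴴ * (A + e * M * fᴴ) * Y
        = (Xᴴ * Ur) * S * (Vrᴴ * Y) + (Xᴴ * e) * M * (fᴴ * Y) := by
      rw [hA]
      simp only [Matrix.mul_add, Matrix.add_mul, Matrix.mul_assoc]
    have t6 : fromRows a g * M * fromCols b c
        = fromBlocks (a * M * b) (a * M * c) (g * M * b) (g * M * c) := by
      rw [fromRows_mul, fromRows_mul_fromCols]
    rw [expand, t1, t2, t4, t5, t3, t6, fromBlocks_add]
    simp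
  -- recover factorization
  have hfact : ∀ M : Matrix (Fin k) (Fin k) ℂ,
      A + e * M * fᴴ
        = X * fromBlocks (S + a * M * b) (a * M * c) (g * M * b) (g * M * c) * Yᴴ := by
    intro M
    have h := congrArg (fun Z => X * Z * Yᴴ) (hN M)
    rw [← h, show X * (Xᴴ * (A + e * M * fᴴ) * Y) * Yᴴ
        = (X * Xᴴ) * (A + e * M * fᴴ) * (Y * Yᴴ) by simp only [Matrix.mul_assoc],
      hXX, hYY, Matrix.one_mul, Matrix.mul_one]
  -- determinant of the block matrix
  have hdetN : ∀ M : Matrix (Fin k) (Fin k) ℂ,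
      (fromBlocks (S + a * M * b) (a * M * c) (g * M * b) (g * M * c)).det
        = S.det * (g.det * M.det * c.det) := by
    intro M
    set N := fromBlocks (S + a * M * b) (a * M * c) (g * M * b) (g * M * c) with hNdef
    set T := fromBlocks (1 : Matrix (Fin r) (Fin r) ℂ) (0 : Matrix (Fin r) (Fin k) ℂ)
        (-(c⁻¹ * b)) (1 : Matrix (Fin k) (Fin k) ℂ) with hT
    have hTdet : T.det = 1 := by
      rw [hT, det_fromBlocks_zero₁₂]; simp
    have h1 : a * M * c * (c⁻¹ * b) = a * M * b := by
      rw [show a * M * c * (c⁻¹ * b) = a * M * (c * c⁻¹) * b by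
        simp only [Matrix.mul_assoc], hcinv, Matrix.mul_one]
    have h2 : g * M * c * (c⁻¹ * b) = g * M * b := by
      rw [show g * M * c * (c⁻¹ * b) = g * M * (c * c⁻¹) * b by
        simp only [Matrix.mul_assoc], hcinv, Matrix.mul_one]
    have hNT : N * T = fromBlocks S (a * M * c) 0 (g * M * c) := by
      rw [hNdef, hT, fromBlocks_multiply]
      simp [Matrix.mul_neg, h1, h2]
    have hd : N.det * T.det = S.det * (g * M * c).det := by
      rw [← det_mul, hNT, det_fromBlocks_zero₂₁]
    rw [hTdet, mul_one] at hd
    rw [hNdef] at hd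
    rw [hd, det_mul, det_mul]
  -- determinants via reindexing
  set σ : Fin r ⊕ Fin k ≃ Fin n := finSumFinEquiv.trans (finCongr hn) with hσ
  have hdet : ∀ M : Matrix (Fin k) (Fin k) ℂ,
      (A + e * M * fᴴ).det
        = (X.submatrix id σ.symm).det
          * (S.det * (g.det * M.det * c.det)) * ((Yᴴ).submatrix σ.symm id).det := by
    intro M
    have h1 : A + e * M * fᴴ
        = X.submatrix id σ.symm
          * (fromBlocks (S + a * M * b) (a * M * c) (g * M * b) (g * M * c)).submatrix
              σ.symm σ.symm
          * (Yᴴ).submatrix σ.symm id := by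
      rw [submatrix_mul_equiv, submatrix_mul_equiv]
      simpa using hfact M
    rw [h1, det_mul, det_mul, det_submatrix_equiv_self σ.symm, hdetN M]
  have h1 := hdet D
  have h2 := hdet 1
  rw [show A + e * fᴴ = A + e * (1 : Matrix (Fin k) (Fin k) ℂ) * fᴴ by
    rw [Matrix.mul_one]]
  rw [h1, h2]
  simp only [det_one, mul_one]
  ring
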